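/- Let α, β ∈ [0, π/2] and ε ∈ [0, √2] with cos|α - β| ≥ 1 - ε²/2. Then |sin²α - sin²β| ≤ ε √(1 - ε²/4). -/
import Mathlib

open Real

theorem abs_sin_sq_sub_le_of_cos_ge (α β ε : ℝ)
    (hα : α ∈ Set.Icc 0 (Real.pi / 2)) (hβ : β ∈ Set.Icc 0 (Real.pi / 2))
    (hε0 : 0 ≤ ε) (hε2 : ε ≤ Real.sqrt 2)
    (hcos : 1 - ε ^ 2 / 2 ≤ Real.cos |α - β|) :
    |Real.sin α ^ 2 - Real.sin β ^ 2| ≤ ε * Real.sqrt (1 - ε ^ 2 / 4) := by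
  obtain ⟨hα0, hα1⟩ := hα
  obtain ⟨hβ0, hβ1⟩ := hβ
  have hpi := Real.pi_pos
  -- ε/2 ≤ 1
  have hε2' : ε / 2 ≤ 1 := by
    have h := Real.sq_sqrt (by norm_num : (0:ℝ) ≤ 2)
    nlinarith [Real.sqrt_nonneg 2]
  have hε2'' : -1 ≤ ε / 2 := by linarith
  set θ := 2 * Real.arcsin (ε / 2) with hθ
  have harc0 : 0 ≤ Real.arcsin (ε / 2) := Real.arcsin_nonneg.2 (by linarith)
  -- arcsin (ε/2) ≤ π/4
  have harc1 : Real.arcsin (ε / 2) ≤ Real.pi / 4 := by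
    rw [show Real.pi / 4 = Real.arcsin (Real.sqrt 2 / 2) by
      rw [← Real.sin_pi_div_four]
      exact (Real.arcsin_sin (by linarith) (by linarith)).symm]
    exact Real.monotone_arcsin (by linarith)
  have hθ0 : 0 ≤ θ := by positivity
  have hθpi2 : θ ≤ Real.pi / 2 := by rw [hθ]; linarith
  -- cos θ = 1 - ε²/2
  have hcosθ : Real.cos θ = 1 - ε ^ 2 / 2 := by
    rw [hθ, Real.cos_two_mul', Real.cos_arcsin, Real.sin_arcsin hε2'' hε2',
      Real.sq_sqrt (by nlinarith : (0:ℝ) ≤ 1 - (ε/2)^2)]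
    ring
  -- |α - β| ≤ θ
  have habs0 : 0 ≤ |α - β| := abs_nonneg _
  have habs1 : |α - β| ≤ Real.pi / 2 := by
    rw [abs_sub_le_iff]; constructor <;> linarith
  have hle : |α - β| ≤ θ := by
    by_contra h
    push_neg at h
    have := Real.cos_lt_cos_of_nonneg_of_le_pi hθ0 (by linarith) h
    rw [hcosθ] at this
    linarith
  -- sin θ = ε √(1-ε²/4)
  have hsinθ : Real.sin θ = ε * Real.sqrt (1 - ε ^ 2 / 4) := by
    rw [hθ, Real.sin_two_mul, Real.sin_arcsin hε2'' hε2', Real.cos_arcsin]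
    rw [show 1 - (ε/2)^2 = 1 - ε^2/4 by ring]
    ring
  -- |sin²α - sin²β| = |sin(α+β) sin(α-β)| ≤ |sin(α-β)| = sin|α-β| ≤ sin θ
  have hid : Real.sin α ^ 2 - Real.sin β ^ 2 = Real.sin (α + β) * Real.sin (α - β) := by
    rw [Real.sin_add, Real.sin_sub]
    nlinarith [Real.sin_sq_add_cos_sq α, Real.sin_sq_add_cos_sq β]
  calc |Real.sin α ^ 2 - Real.sin β ^ 2| = |Real.sin (α + β)| * |Real.sin (α - β)| := by
        rw [hid, abs_mul]
    _ ≤ 1 * |Real.sin (α - β)| := by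
        gcongr; exact Real.abs_sin_le_one _
    _ = Real.sin |α - β| := by
        rw [one_mul]
        rcases abs_cases (α - β) with ⟨h1, h2⟩ | ⟨h1, h2⟩
        · rw [h1, abs_of_nonneg (Real.sin_nonneg_of_nonneg_of_le_pi h2 (by linarith))]
        · have hs : Real.sin (α - β) ≤ 0 :=
            Real.sin_nonpos_of_nonpos_of_neg_pi_le (le_of_lt h2) (by linarith)
          rw [h1, Real.sin_neg, abs_of_nonpos hs]
    _ ≤ Real.sin θ := by
        apply Real.sin_le_sin_of_le_of_le_pi_div_two (by linarith) hθpi2 hle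
    _ = ε * Real.sqrt (1 - ε ^ 2 / 4) := hsinθ
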